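/- Every positive solution (a_n), (b_n) of the string system satisfies, for all n ≥ 1: a_n ≤ b_n², 3 a_n b_n ≤ n, and hence 9 a_n³ ≤ n², i.e. 0 ≤ a_n / n^{2/3} ≤ 9^{−1/3}. -/
import Mathlib


/-- Every positive solution of the string system satisfies, for
`n ≥ 1`: `aₙ ≤ bₙ²`, `3 aₙ bₙ ≤ n`, hence `9 aₙ³ ≤ n²`, i.e.
`0 ≤ aₙ/n^{2/3} ≤ 9^{−1/3}`. -/
theorem stmt9 (a b : ℕ → ℝ) (ha0 : a 0 = 0)
    (hapos : ∀ n : ℕ, 0 < a (n + 1)) (hbpos : ∀ n : ℕ, 0 < b n)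
    (h1 : ∀ n : ℕ, a n + a (n + 1) = (b n) ^ 2)
    (h2 : ∀ n : ℕ, 1 ≤ n → 3 * a n * (b n + b (n - 1)) = (n : ℝ)) :
    ∀ n : ℕ, 1 ≤ n →
      a n ≤ (b n) ^ 2 ∧
      3 * a n * b n ≤ (n : ℝ) ∧
      9 * (a n) ^ 3 ≤ (n : ℝ) ^ 2 ∧
      0 ≤ a n / (n : ℝ) ^ ((2 : ℝ) / 3) ∧
      a n / (n : ℝ) ^ ((2 : ℝ) / 3) ≤ (9 : ℝ) ^ (-(1 : ℝ) / 3) := by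
  intro n hn
  obtain ⟨m, rfl⟩ := Nat.exists_eq_add_of_le hn
  set k := 1 + m with hk
  have hka : 0 < a k := by
    have : k = m + 1 := by omega
    rw [this]; exact hapos m
  have hA : a k ≤ (b k) ^ 2 := by
    have := h1 k
    nlinarith [hapos k]
  have hB : 3 * a k * b k ≤ (k : ℝ) := by
    have h := h2 k (by omega)
    nlinarith [hbpos (k - 1), hbpos k]
  have hbk : 0 < b k := hbpos k
  have hC : 9 * (a k) ^ 3 ≤ (k : ℝ) ^ 2 := by
    have hsq : (3 * a k * b k) ^ 2 ≤ (k : ℝ) ^ 2 := by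
      have h0 : (0:ℝ) ≤ 3 * a k * b k := by positivity
      nlinarith [mul_self_le_mul_self h0 hB]
    nlinarith [mul_le_mul_of_nonneg_left hA (le_of_lt hka), hka]
  have hkpos : (0 : ℝ) < (k : ℝ) := by positivity
  have hnp : (0 : ℝ) < (k : ℝ) ^ ((2 : ℝ) / 3) := Real.rpow_pos_of_pos hkpos _
  have hD : 0 ≤ a k / (k : ℝ) ^ ((2 : ℝ) / 3) := by positivity
  refine ⟨hA, hB, hC, hD, ?_⟩
  have h9 : (0 : ℝ) < (9 : ℝ) ^ (-(1 : ℝ) / 3) := Real.rpow_pos_of_pos (by norm_num) _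
  have hcube : (a k / (k : ℝ) ^ ((2 : ℝ) / 3)) ^ 3 ≤ ((9 : ℝ) ^ (-(1 : ℝ) / 3)) ^ 3 := by
    have e1 : ((k : ℝ) ^ ((2 : ℝ) / 3)) ^ 3 = (k : ℝ) ^ 2 := by
      rw [← Real.rpow_natCast ((k : ℝ) ^ ((2 : ℝ) / 3)) 3, ← Real.rpow_mul hkpos.le]
      norm_num
    have e2 : ((9 : ℝ) ^ (-(1 : ℝ) / 3)) ^ 3 = 9⁻¹ := by
      rw [← Real.rpow_natCast ((9 : ℝ) ^ (-(1 : ℝ) / 3)) 3,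
        ← Real.rpow_mul (by norm_num : (0:ℝ) ≤ 9)]
      norm_num
    rw [div_pow, e1, e2, div_le_iff₀ (by positivity)]
    nlinarith [hC]
  exact le_of_pow_le_pow_left₀ (by norm_num) h9.le hcube
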